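/- Let F(u) = ∫₀^{u} exp(t²) dt, f(u) = 1 − 2·u·exp(−u²)·F(u), and let u₀ be the unique zero of f in (0, ∞). Then f'(u) < 0 for all u with 0 < u ≤ u₀; in particular f is strictly decreasing on [0, u₀] and has no local extremum in (0, u₀). Consequently, for ĉ₁ > 0 and q > 0 the function κ(y) = (1/ĉ₁)·f(q·y) is strictly decreasing on [0, u₀/q]. -/

import Mathlib

open Real MeasureTheory intervalIntegral Set

/-- `F(u) = ∫₀^u exp(t²) dt`. -/
noncomputable def Ferf (u : ℝ) : ℝ := ∫ t in (0:ℝ)..u, Real.exp (t ^ 2)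

/-- `f(u) = 1 - 2 u exp(-u²) F(u)`, the rescaled curvature function. -/
noncomputable def fker (u : ℝ) : ℝ := 1 - 2 * u * Real.exp (-(u ^ 2)) * Ferf u

lemma continuous_exp_sq : Continuous fun t : ℝ => Real.exp (t ^ 2) := by
  continuity

lemma hasDerivAt_Ferf (u : ℝ) : HasDerivAt Ferf (Real.exp (u ^ 2)) u := by
  exact intervalIntegral.integral_hasDerivAt_right
    (continuous_exp_sq.intervalIntegrable _ _)
    (continuous_exp_sq.stronglyMeasurableAtFilter _ _)
    continuous_exp_sq.continuousAt

lemma hasDerivAt_fker (u : ℝ) :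
    HasDerivAt fker (2 * Real.exp (-(u ^ 2)) * (2 * u ^ 2 - 1) * Ferf u - 2 * u) u := by
  have h1 : HasDerivAt (fun x : ℝ => 2 * x * Real.exp (-(x ^ 2)))
      (2 * Real.exp (-(u ^ 2)) + 2 * u * (Real.exp (-(u ^ 2)) * (-(2 * u)))) u := by
    have hx : HasDerivAt (fun x : ℝ => 2 * x) 2 u := by
      simpa using (hasDerivAt_id u).const_mul (2 : ℝ)
    have he : HasDerivAt (fun x : ℝ => Real.exp (-(x ^ 2)))
        (Real.exp (-(u ^ 2)) * (-(2 * u))) u := by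
      have hp : HasDerivAt (fun x : ℝ => -(x ^ 2)) (-(2 * u)) u := by
        simpa using ((hasDerivAt_pow 2 u).fun_neg)
      exact hp.exp
    simpa using hx.fun_mul he
  have h2 := (h1.mul (hasDerivAt_Ferf u)).const_sub 1
  have heq : -((2 * Real.exp (-(u ^ 2)) + 2 * u * (Real.exp (-(u ^ 2)) * (-(2 * u)))) * Ferf u
      + 2 * u * Real.exp (-(u ^ 2)) * Real.exp (u ^ 2))
      = 2 * Real.exp (-(u ^ 2)) * (2 * u ^ 2 - 1) * Ferf u - 2 * u := by
    have h : Real.exp (-(u ^ 2)) * Real.exp (u ^ 2) = 1 := by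
      rw [← Real.exp_add]; simp
    linear_combination (-(2 * u)) * h
  have h3 : HasDerivAt fker
      (-((2 * Real.exp (-(u ^ 2)) + 2 * u * (Real.exp (-(u ^ 2)) * (-(2 * u)))) * Ferf u
      + 2 * u * Real.exp (-(u ^ 2)) * Real.exp (u ^ 2))) u := h2
  exact heq ▸ h3

lemma Ferf_nonneg {u : ℝ} (hu : 0 ≤ u) : 0 ≤ Ferf u := by
  apply intervalIntegral.integral_nonneg hu
  intro t _
  positivity

lemma continuous_fker : Continuous fker :=
  continuous_iff_continuousAt.mpr fun u => (hasDerivAt_fker u).continuousAt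

theorem fker_strictly_decreasing_up_to_zero
    (u₀ : ℝ) (hu₀ : 0 < u₀) (hfu₀ : fker u₀ = 0)
    (huniq : ∀ u : ℝ, 0 < u → fker u = 0 → u = u₀) :
    (∀ u : ℝ, 0 < u → u ≤ u₀ → deriv fker u < 0) ∧
    StrictAntiOn fker (Set.Icc 0 u₀) ∧
    ∀ c1 q : ℝ, 0 < c1 → 0 < q →
      StrictAntiOn (fun y : ℝ => (1 / c1) * fker (q * y)) (Set.Icc 0 (u₀ / q)) := by
  -- fker is nonnegative on (0, u₀]
  have hnonneg : ∀ u : ℝ, 0 < u → u ≤ u₀ → 0 ≤ fker u := by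
    intro u hu hle
    by_contra hneg
    push_neg at hneg
    have h0 : fker 0 = 1 := by simp [fker, Ferf]
    have hivt : Set.Ioo (fker u) (fker 0) ⊆ fker '' Set.Ioo 0 u := by
      apply intermediate_value_Ioo' hu.le continuous_fker.continuousOn
    have h00 : (0 : ℝ) ∈ Set.Ioo (fker u) (fker 0) := by
      constructor <;> simp [h0, hneg]
    obtain ⟨c, hc, hfc⟩ := hivt h00
    have hcu : c = u₀ := huniq c hc.1 hfc
    have : u₀ < u := hcu ▸ hc.2
    linarith
  have hderiv : ∀ u : ℝ, 0 < u → u ≤ u₀ → deriv fker u < 0 := by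
    intro u hu hle
    rw [(hasDerivAt_fker u).deriv]
    have hE : 0 < Real.exp (-(u ^ 2)) := Real.exp_pos _
    have hF : 0 ≤ Ferf u := Ferf_nonneg hu.le
    have hbd : 2 * u * Real.exp (-(u ^ 2)) * Ferf u ≤ 1 := by
      have := hnonneg u hu hle
      simp only [fker] at this
      linarith
    nlinarith [mul_nonneg (sub_nonneg.2 hbd) (sq_nonneg u),
      mul_nonneg (mul_nonneg hu.le hE.le) hF, mul_pos hu hu]
  have hanti : StrictAntiOn fker (Set.Icc 0 u₀) := by
    apply strictAntiOn_of_deriv_neg (convex_Icc 0 u₀) continuous_fker.continuousOn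
    intro x hx
    rw [interior_Icc] at hx
    exact hderiv x hx.1 hx.2.le
  refine ⟨hderiv, hanti, ?_⟩
  intro c1 q hc1 hq x hx y hy hxy
  have hmem : ∀ z : ℝ, z ∈ Set.Icc 0 (u₀ / q) → q * z ∈ Set.Icc 0 u₀ := by
    intro z hz
    obtain ⟨hz0, hz1⟩ := hz
    constructor
    · positivity
    · calc q * z ≤ q * (u₀ / q) := by
            exact mul_le_mul_of_nonneg_left hz1 hq.le
        _ = u₀ := by field_simp
  have hlt : fker (q * y) < fker (q * x) :=
    hanti (hmem x hx) (hmem y hy) (by nlinarith)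
  have : 0 < 1 / c1 := by positivity
  simpa using mul_lt_mul_of_pos_left hlt this
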